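/- Let F be an infinite field, X₁, …, X_k pairwise disjoint nonempty sets of variables, and n ≥ 1. Then the tensor product of generic matrix algebras Fₙ⟨X₁⟩ ⊗_F ⋯ ⊗_F Fₙ⟨X_k⟩ is a domain: it is a nontrivial ring in which the product of any two nonzero elements is nonzero. -/

import Mathlib

open scoped TensorProduct PiTensorProduct

set_option synthInstance.maxHeartbeats 1000000
set_option maxHeartbeats 1000000

/-- The `F`-algebra homomorphism `Φₙ^X : F⟨X⟩ → Mₙ(F[t])` sending each variable
`x ∈ X` to its generic matrix `(t^{(x)}_{ij})`.  The generic matrix algebra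
`Fₙ⟨X⟩` is its range. -/
noncomputable def genericMatrixHom (F : Type*) [Field F] (X : Type*) (n : ℕ) :
    FreeAlgebra F X →ₐ[F] Matrix (Fin n) (Fin n) (MvPolynomial (X × Fin n × Fin n) F) :=
  FreeAlgebra.lift F fun x => Matrix.of fun i j => MvPolynomial.X (x, i, j)

open MvPolynomial

set_option linter.unusedSectionVars false
set_option linter.unusedVariables false

namespace GMD

open Fin.NatCast
open Module

variable (F : Type*) [Field F] (k n : ℕ) [NeZero n] (X : Fin k → Type*)

/-- index of the `u`-variables -/
abbrev U := Σ i : Fin k, X i × Fin n × Fin n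
/-- coefficient ring -/
abbrev L := MvPolynomial (U k n X) F
/-- big commutative ring: `z`-variables plus `u`-variables -/
abbrev Cb := MvPolynomial (Fin k ⊕ U k n X) F
/-- matrix index -/
abbrev Q := Fin k → Fin n
/-- big matrix ring -/
abbrev M := Matrix (Q k n) (Q k n) (Cb F k n X)

noncomputable def z (i : Fin k) : Cb F k n X := MvPolynomial.X (Sum.inl i)

noncomputable def inclL : L F k n X →ₐ[F] Cb F k n X := rename Sum.inr

def shiftVar (c : Fin k → ℕ) : U k n X → U k n X :=
  fun v => ⟨v.1, v.2.1, v.2.2.1, v.2.2.2 + (c v.1 : Fin n)⟩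

def shiftVarInv (c : Fin k → ℕ) : U k n X → U k n X :=
  fun v => ⟨v.1, v.2.1, v.2.2.1, v.2.2.2 - (c v.1 : Fin n)⟩

lemma shiftVar_leftInverse (c : Fin k → ℕ) :
    Function.LeftInverse (shiftVarInv k n X c) (shiftVar k n X c) := by
  intro v
  simp [shiftVar, shiftVarInv]

noncomputable def shf (c : Fin k → ℕ) : L F k n X →ₐ[F] L F k n X :=
  rename (shiftVar k n X c)

lemma shf_shf (p : Q k n) (g : Fin k → ℕ) (m : L F k n X) :
    shf F k n X (fun i => (p i : ℕ)) (shf F k n X g m)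
      = shf F k n X (fun i => ((p i + (g i : Fin n) : Fin n) : ℕ)) m := by
  simp only [shf, rename_rename]
  have : (shiftVar k n X fun i => (p i : ℕ)) ∘ shiftVar k n X g
      = shiftVar k n X fun i => ((p i + (g i : Fin n) : Fin n) : ℕ) := by
    funext v
    simp only [Function.comp, shiftVar, Fin.cast_val_eq_self]
    congr 2
    abel
  rw [this]

lemma shf_zero (m : L F k n X) : shf F k n X (fun _ => 0) m = m := by
  have : shiftVar k n X (fun _ => 0) = id := by
    funext v; simp [shiftVar]
  simp [shf, this, rename_id]

lemma shf_injective (c : Fin k → ℕ) : Function.Injective (shf F k n X c) :=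
  rename_injective _ (shiftVar_leftInverse k n X c).injective

def pad (p : Q k n) (g : Fin k → ℕ) : Q k n := fun i => p i + (g i : Fin n)

noncomputable def zmon (p : Q k n) (g : Fin k → ℕ) : Cb F k n X :=
  ∏ i, z F k n X i ^ (((p i : ℕ) + g i) / n)

lemma pad_pad (p : Q k n) (g h : Fin k → ℕ) :
    pad k n (pad k n p g) h = pad k n p (g + h) := by
  funext i
  simp only [pad, Pi.add_apply, Nat.cast_add]
  rw [add_assoc]

lemma nat_div_key (s h : ℕ) (hn : 0 < n) : s / n + (s % n + h) / n = (s + h) / n := by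
  conv_rhs => rw [← Nat.div_add_mod s n]
  rw [add_assoc, Nat.mul_add_div hn]

lemma pad_val (p : Q k n) (g : Fin k → ℕ) (i : Fin k) :
    ((pad k n p g i : ℕ)) = ((p i : ℕ) + g i) % n := by
  simp only [pad, Fin.val_add, Fin.val_natCast]
  rw [Nat.add_mod_mod]

lemma zmon_mul (p : Q k n) (g h : Fin k → ℕ) :
    zmon F k n X p g * zmon F k n X (pad k n p g) h = zmon F k n X p (g + h) := by
  rw [zmon, zmon, zmon, ← Finset.prod_mul_distrib]
  refine Finset.prod_congr rfl fun i _ => ?_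
  rw [← pow_add]
  congr 1
  rw [pad_val, Pi.add_apply, nat_div_key n _ _ (Nat.pos_of_ne_zero (NeZero.ne n)), add_assoc]

/-- the building block: image of `ℓ · y^g` in the matrix model -/
noncomputable def pis (g : Fin k → ℕ) : L F k n X →ₗ[F] M F k n X where
  toFun ℓ := Matrix.of fun p q =>
    if q = pad k n p g then inclL F k n X (shf F k n X (fun i => (p i : ℕ)) ℓ) * zmon F k n X p g
    else 0
  map_add' a b := by
    ext p q
    simp only [Matrix.of_apply, map_add, Matrix.add_apply]
    split <;> simp [add_mul]
  map_smul' c a := by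
    ext p q
    simp only [Matrix.of_apply, map_smul, Matrix.smul_apply, RingHom.id_apply]
    split <;> simp [smul_mul_assoc]

/-- the representation map of the abstract twisted-polynomial model -/
noncomputable def pim : ((Fin k → ℕ) →₀ L F k n X) →ₗ[F] M F k n X :=
  Finsupp.lsum F (pis F k n X)

lemma pim_single (g : Fin k → ℕ) (ℓ : L F k n X) :
    pim F k n X (Finsupp.single g ℓ) = pis F k n X g ℓ := by
  simp [pim]

lemma pis_mul (g h : Fin k → ℕ) (ℓ m : L F k n X) :
    pis F k n X g ℓ * pis F k n X h m
      = pis F k n X (g + h) (ℓ * shf F k n X g m) := by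
  ext p q
  rw [Matrix.mul_apply]
  simp only [pis, LinearMap.coe_mk, AddHom.coe_mk, Matrix.of_apply]
  rw [Finset.sum_eq_single (pad k n p g)]
  · rw [if_pos rfl]
    by_cases hq : q = pad k n p (g + h)
    · rw [if_pos (by rw [hq, pad_pad]), if_pos hq]
      rw [map_mul, shf_shf, map_mul]
      have : ∀ i, ((pad k n p g i : ℕ)) = (fun i => ((p i + (g i : Fin n) : Fin n) : ℕ)) i :=
        fun i => rfl
      rw [show (fun i => ((pad k n p g i : ℕ))) = (fun i => ((p i + (g i : Fin n) : Fin n) : ℕ)) from rfl]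
      rw [← zmon_mul F k n X p g h]
      ring
    · rw [if_neg (fun hc => hq (by rw [← pad_pad]; exact hc)), if_neg hq, mul_zero]
  · intro r _ hr
    rw [if_neg hr, zero_mul]
  · intro hmem
    exact absurd (Finset.mem_univ _) hmem

abbrev W := (Fin k → ℕ) →₀ L F k n X

/-- twisted convolution -/
noncomputable def conv (f g : W F k n X) : W F k n X :=
  f.sum fun a ℓ => g.sum fun b m => Finsupp.single (a + b) (ℓ * shf F k n X a m)

lemma conv_single_single (a b : Fin k → ℕ) (ℓ m : L F k n X) :
    conv F k n X (Finsupp.single a ℓ) (Finsupp.single b m)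
      = Finsupp.single (a + b) (ℓ * shf F k n X a m) := by
  unfold conv
  rw [Finsupp.sum_single_index (by simp), Finsupp.sum_single_index (by simp)]

lemma conv_add_left (f₁ f₂ g : W F k n X) :
    conv F k n X (f₁ + f₂) g = conv F k n X f₁ g + conv F k n X f₂ g := by
  unfold conv
  exact Finsupp.sum_add_index' (fun a => by simp)
    (fun a ℓ₁ ℓ₂ => by simp [add_mul, Finsupp.single_add, Finsupp.sum_add])

lemma conv_add_right (f g₁ g₂ : W F k n X) :
    conv F k n X f (g₁ + g₂) = conv F k n X f g₁ + conv F k n X f g₂ := by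
  unfold conv
  rw [← Finsupp.sum_add]
  exact Finsupp.sum_congr fun a _ => Finsupp.sum_add_index' (fun b => by simp)
    (fun b m₁ m₂ => by simp [mul_add, Finsupp.single_add])

lemma conv_zero_left (g : W F k n X) : conv F k n X 0 g = 0 := by simp [conv]

lemma conv_zero_right (f : W F k n X) : conv F k n X f 0 = 0 := by simp [conv]

lemma pim_mul (f g : W F k n X) :
    pim F k n X f * pim F k n X g = pim F k n X (conv F k n X f g) := by
  induction f using Finsupp.induction_linear with
  | zero => simp [conv_zero_left]
  | add f₁ f₂ h₁ h₂ => rw [map_add, add_mul, h₁, h₂, conv_add_left, map_add]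
  | single a ℓ =>
    induction g using Finsupp.induction_linear with
    | zero => simp [conv_zero_right]
    | add g₁ g₂ h₁ h₂ => rw [map_add, mul_add, h₁, h₂, conv_add_right, map_add]
    | single b m =>
      rw [conv_single_single, pim_single, pim_single, pim_single, pis_mul]

section digits

/-- base-`N` digit uniqueness -/
lemma digit_inj : ∀ (m : ℕ) (N : ℕ) (a b : Fin m → ℕ), (∀ i, a i < N) → (∀ i, b i < N) →
    (∑ i, a i * N ^ (i : ℕ)) = (∑ i, b i * N ^ (i : ℕ)) → a = b := by
  intro m
  induction m with
  | zero => intro N a b _ _ _; funext i; exact absurd i.2 (by omega)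
  | succ m ih =>
    intro N a b ha hb hs
    have hN : 0 < N := lt_of_le_of_lt (Nat.zero_le _) (ha 0)
    rw [Fin.sum_univ_succ, Fin.sum_univ_succ] at hs
    have hrw : ∀ c : Fin (m+1) → ℕ,
        (∑ i : Fin m, c i.succ * N ^ ((i.succ : Fin (m+1)) : ℕ))
          = N * ∑ i : Fin m, c i.succ * N ^ (i : ℕ) := by
      intro c
      rw [Finset.mul_sum]
      refine Finset.sum_congr rfl fun i _ => ?_
      rw [Fin.val_succ, pow_succ]
      ring
    rw [hrw a, hrw b] at hs
    simp only [Fin.val_zero, pow_zero, mul_one] at hs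
    set Sa := ∑ i : Fin m, a i.succ * N ^ (i:ℕ) with hSa
    set Sb := ∑ i : Fin m, b i.succ * N ^ (i:ℕ) with hSb
    have h0 : a 0 = b 0 := by
      have e1 : (a 0 + N * Sa) % N = a 0 := by
        rw [Nat.add_mul_mod_self_left]; exact Nat.mod_eq_of_lt (ha 0)
      have e2 : (b 0 + N * Sb) % N = b 0 := by
        rw [Nat.add_mul_mod_self_left]; exact Nat.mod_eq_of_lt (hb 0)
      rw [← e1, ← e2, hs]
    have htail : (fun i : Fin m => a i.succ) = fun i : Fin m => b i.succ := by
      apply ih N _ _ (fun i => ha i.succ) (fun i => hb i.succ)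
      rw [h0] at hs
      exact Nat.eq_of_mul_eq_mul_left hN (Nat.add_left_cancel hs)
    funext i
    refine Fin.cases h0 (fun j => ?_) i
    exact congrFun htail j

end digits

lemma conv_ne_zero (f g : W F k n X) (hf : f ≠ 0) (hg : g ≠ 0) :
    conv F k n X f g ≠ 0 := by
  classical
  -- weight function
  set N : ℕ := 1 + (f.support ∪ g.support).sup (fun a => Finset.univ.sup a) with hN
  have hbound : ∀ a ∈ f.support ∪ g.support, ∀ i, a i < N := by
    intro a ha i
    have h1 : a i ≤ Finset.univ.sup a := Finset.le_sup (Finset.mem_univ i)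
    have h2 : Finset.univ.sup a ≤ (f.support ∪ g.support).sup (fun a => Finset.univ.sup a) :=
      Finset.le_sup ha
    omega
  set w : (Fin k → ℕ) → ℕ := fun a => ∑ i, a i * N ^ (i : ℕ) with hw
  have hwadd : ∀ a b, w (a + b) = w a + w b := by
    intro a b
    simp only [hw, Pi.add_apply, add_mul, Finset.sum_add_distrib]
  obtain ⟨A, hA, hAmax⟩ := Finset.exists_max_image f.support w (Finsupp.support_nonempty_iff.mpr hf)
  obtain ⟨B, hB, hBmax⟩ := Finset.exists_max_image g.support w (Finsupp.support_nonempty_iff.mpr hg)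
  have key : conv F k n X f g (A + B) = f A * shf F k n X A (g B) := by
    unfold conv
    rw [Finsupp.sum_apply]
    rw [Finsupp.sum]
    rw [Finset.sum_eq_single A]
    · rw [Finsupp.sum_apply, Finsupp.sum, Finset.sum_eq_single B]
      · rw [Finsupp.single_apply, if_pos rfl]
      · intro b hb hbB
        rw [Finsupp.single_apply, if_neg]
        intro hc
        have hww := congrArg w hc
        rw [hwadd, hwadd] at hww
        have h1 : w b ≤ w B := hBmax b hb
        have h2 : w b = w B := by omega
        exact hbB (digit_inj k N b B (hbound b (Finset.mem_union_right _ hb))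
          (hbound B (Finset.mem_union_right _ hB)) h2)
      · intro hcon; exact absurd hB hcon
    · intro a ha haA
      rw [Finsupp.sum_apply, Finsupp.sum]
      refine Finset.sum_eq_zero fun b hb => ?_
      rw [Finsupp.single_apply, if_neg]
      intro hc
      have hww := congrArg w hc
      rw [hwadd, hwadd] at hww
      have h1 : w a ≤ w A := hAmax a ha
      have h2 : w b ≤ w B := hBmax b hb
      have h3 : w a = w A := by omega
      exact haA (digit_inj k N a A (hbound a (Finset.mem_union_left _ ha))
        (hbound A (Finset.mem_union_left _ hA)) h3)
    · intro hcon; exact absurd hA hcon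
  intro hzero
  rw [hzero] at key
  have hfA : f A ≠ 0 := Finsupp.mem_support_iff.mp hA
  have hgB : g B ≠ 0 := Finsupp.mem_support_iff.mp hB
  have : f A * shf F k n X A (g B) ≠ 0 :=
    mul_ne_zero hfA (fun hc => hgB (by
      have := shf_injective F k n X (fun i => A i) (a₁ := g B) (a₂ := 0) (by simpa using hc)
      exact this))
  exact this (by simpa using key.symm)

section extraction

noncomputable def q0 : Q k n := fun _ => 0
noncomputable def qcast (g : Fin k → ℕ) : Q k n := fun i => (g i : Fin n)
noncomputable def divF (g : Fin k → ℕ) : Fin k →₀ ℕ :=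
  Finsupp.equivFunOnFinite.symm (fun i => g i / n)

lemma sumAlg_z (i : Fin k) :
    (sumAlgEquiv F (Fin k) (U k n X)) (z F k n X i) = MvPolynomial.X i := by
  rw [z, sumAlgEquiv_X_inl]

lemma sumAlg_inclL (ℓ : L F k n X) :
    (sumAlgEquiv F (Fin k) (U k n X)) (inclL F k n X ℓ) = MvPolynomial.C ℓ := by
  have := congrArg (fun (φ : L F k n X →ₐ[F] MvPolynomial (Fin k) (L F k n X)) => φ ℓ)
    (sumAlgEquiv_comp_rename_inr (R := F) (S₁ := Fin k) (S₂ := U k n X))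
  simpa [inclL] using this

lemma pim_eval (f : W F k n X) (g : Fin k → ℕ) :
    MvPolynomial.coeff (divF k n g)
      ((sumAlgEquiv F (Fin k) (U k n X)) ((pim F k n X f) (q0 k n) (qcast k n g))) = f g := by
  induction f using Finsupp.induction_linear with
  | zero => simp
  | add f₁ f₂ h₁ h₂ =>
    rw [map_add]
    simp only [Matrix.add_apply, map_add, MvPolynomial.coeff_add, h₁, h₂, Finsupp.add_apply]
  | single h ℓ =>
    rw [pim_single]
    simp only [pis, LinearMap.coe_mk, AddHom.coe_mk, Matrix.of_apply]
    have hshf : shf F k n X (fun i => ((q0 k n i : ℕ))) ℓ = ℓ := by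
      have : (fun i => ((q0 k n i : ℕ))) = fun _ : Fin k => 0 := by
        funext i; simp [q0]
      rw [this, shf_zero]
    by_cases hc : qcast k n g = pad k n (q0 k n) h
    · rw [if_pos hc, hshf]
      have hz : zmon F k n X (q0 k n) h = ∏ i, z F k n X i ^ (h i / n) := by
        unfold zmon
        refine Finset.prod_congr rfl fun i _ => ?_
        congr 1
        simp [q0]
      rw [hz, map_mul, sumAlg_inclL, map_prod]
      simp only [map_pow, sumAlg_z]
      have hmon : (MvPolynomial.C ℓ * ∏ i, (MvPolynomial.X i : MvPolynomial (Fin k) (L F k n X)) ^ (h i / n))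
          = MvPolynomial.monomial (divF k n h) ℓ := by
        rw [MvPolynomial.monomial_eq]
        congr 1
        rw [Finsupp.prod_fintype]
        · rfl
        · intro i; rfl
      rw [hmon, MvPolynomial.coeff_monomial, Finsupp.single_apply]
      have hmod : ∀ i, h i % n = g i % n := by
        intro i
        have := congrFun hc i
        simp only [qcast, pad, q0, zero_add] at this
        have hv := congrArg Fin.val this
        simpa [Fin.val_natCast] using hv.symm
      by_cases hdg : divF k n h = divF k n g
      · rw [if_pos hdg, if_pos, eq_comm]
        funext i
        have h1 : h i / n = g i / n := by
          have := congrArg (fun (u : Fin k →₀ ℕ) => u i) hdg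
          simpa [divF] using this
        have hm := hmod i
        have e1 := Nat.div_add_mod (h i) n
        have e2 := Nat.div_add_mod (g i) n
        rw [h1] at e1
        omega
      · rw [if_neg hdg, if_neg, eq_comm]
        intro hc2
        exact hdg (by rw [hc2])
    · rw [if_neg hc]
      simp only [map_zero, MvPolynomial.coeff_zero]
      rw [Finsupp.single_apply, if_neg]
      intro hc2
      subst hc2
      apply hc
      funext i
      simp only [qcast, pad, q0, zero_add]
    

lemma pim_ne_zero (f : W F k n X) (hf : f ≠ 0) : pim F k n X f ≠ 0 := by
  intro hz
  obtain ⟨g, hg⟩ := Finsupp.ne_iff.mp hf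
  apply hg
  rw [← pim_eval F k n X f g, hz]
  simp

end extraction

section slot
open Sum

noncomputable def EV (i : Fin k) :
    MvPolynomial (X i × Fin n × Fin n) F →ₐ[F] Cb F k n X :=
  aeval fun v => MvPolynomial.X (Sum.inr ⟨i, v.1, v.2.2 - v.2.1, v.2.1⟩)
    * z F k n X i ^ (((v.2.1 : ℕ) + ((v.2.2 - v.2.1 : Fin n) : ℕ)) / n)

noncomputable def deltaOff (i : Fin k) (p q : Q k n) : Cb F k n X :=
  if ∀ j, j ≠ i → p j = q j then 1 else 0

noncomputable def Phi (i : Fin k) : Matrix (Fin n) (Fin n) (Cb F k n X) →ₐ[F] M F k n X where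
  toFun A := Matrix.of fun p q => A (p i) (q i) * deltaOff F k n X i p q
  map_one' := by
    ext p q
    simp only [Matrix.of_apply, deltaOff, Matrix.one_apply]
    by_cases hpq : p = q
    · subst hpq; simp
    · rw [if_neg hpq]
      by_cases hi : p i = q i
      · rw [if_pos hi, if_neg, mul_zero]
        intro hall
        exact hpq (funext fun j => by
          by_cases hji : j = i
          · subst hji; exact hi
          · exact hall j hji)
      · rw [if_neg hi, zero_mul]
  map_mul' A B := by
    classical
    refine Matrix.ext fun p q => ?_
    simp only [Matrix.of_apply, Matrix.mul_apply]
    have key : ∀ r : Q k n, r ∈ Finset.univ →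
        r ∉ Finset.univ.image (fun s : Fin n => Function.update p i s) →
        A (p i) (r i) * deltaOff F k n X i p r * (B (r i) (q i) * deltaOff F k n X i r q)
          = 0 := by
      intro r _ hr
      have hδ : deltaOff F k n X i p r = 0 := by
        rw [deltaOff, if_neg]
        intro hall
        apply hr
        refine Finset.mem_image.mpr ⟨r i, Finset.mem_univ _, ?_⟩
        funext j
        by_cases hji : j = i
        · subst hji; rw [Function.update_self]
        · rw [Function.update_of_ne hji]; exact hall j hji
      rw [hδ, mul_zero, zero_mul]
    rw [← Finset.sum_subset (Finset.subset_univ _) key]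
    rw [Finset.sum_image (fun s _ t _ hst => by
      have := congrFun hst i
      simpa [Function.update_self] using this)]
    rw [Finset.sum_mul]
    refine Finset.sum_congr rfl fun s _ => ?_
    have h1 : deltaOff F k n X i p (Function.update p i s) = 1 := by
      rw [deltaOff, if_pos]
      intro j hji
      rw [Function.update_of_ne hji]
    have h2 : deltaOff F k n X i (Function.update p i s) q = deltaOff F k n X i p q := by
      unfold deltaOff
      congr 1
      refine propext ⟨fun hall j hji => ?_, fun hall j hji => ?_⟩
      · rw [← hall j hji, Function.update_of_ne hji]
      · rw [Function.update_of_ne hji]; exact hall j hji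
    rw [Function.update_self, h1, h2]
    ring
  map_zero' := by ext p q; simp
  map_add' A B := by
    ext p q
    simp only [Matrix.of_apply, Matrix.add_apply, add_mul]
  commutes' r := by
    ext p q
    simp only [Matrix.of_apply, Matrix.algebraMap_matrix_apply, deltaOff]
    by_cases hpq : p = q
    · subst hpq; simp
    · rw [if_neg hpq]
      by_cases hi : p i = q i
      · rw [if_pos hi, if_neg, mul_zero]
        intro hall
        exact hpq (funext fun j => by
          by_cases hji : j = i
          · subst hji; exact hi
          · exact hall j hji)
      · rw [if_neg hi, zero_mul]

lemma Phi_apply (i : Fin k) (A : Matrix (Fin n) (Fin n) (Cb F k n X)) (p q : Q k n) :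
    Phi F k n X i A p q = A (p i) (q i) * deltaOff F k n X i p q := rfl

lemma Phi_mul_apply_ne {i j : Fin k} (hij : i ≠ j)
    (A B : Matrix (Fin n) (Fin n) (Cb F k n X)) :
    Phi F k n X i A * Phi F k n X j B = Matrix.of fun p q =>
      A (p i) (q i) * B (p j) (q j)
        * (if ∀ m, m ≠ i → m ≠ j → p m = q m then 1 else 0) := by
  classical
  refine Matrix.ext fun p q => ?_
  rw [Matrix.mul_apply]
  simp only [Phi_apply, Matrix.of_apply]
  rw [Finset.sum_eq_single (Function.update p i (q i))]
  · rw [Function.update_self, Function.update_of_ne (Ne.symm hij)]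
    have h1 : deltaOff F k n X i p (Function.update p i (q i)) = 1 := by
      rw [deltaOff, if_pos fun m hmi => (Function.update_of_ne hmi _ _).symm]
    have h2 : deltaOff F k n X j (Function.update p i (q i)) q
        = (if ∀ m, m ≠ i → m ≠ j → p m = q m then 1 else 0) := by
      unfold deltaOff
      congr 1
      refine propext ⟨fun hall m hmi hmj => ?_, fun hall m hmj => ?_⟩
      · rw [← hall m hmj, Function.update_of_ne hmi]
      · by_cases hmi : m = i
        · subst hmi; rw [Function.update_self]
        · rw [Function.update_of_ne hmi]; exact hall m hmi hmj
    rw [h1, h2]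
    ring
  · intro r _ hr
    by_cases hd1 : deltaOff F k n X i p r = 0
    · rw [hd1, mul_zero, zero_mul]
    · by_cases hd2 : deltaOff F k n X j r q = 0
      · rw [hd2, mul_zero, mul_zero]
      · exfalso
        apply hr
        have hall1 : ∀ m, m ≠ i → p m = r m := by
          by_contra hc
          exact hd1 (by rw [deltaOff, if_neg]; push_neg at hc ⊢; exact hc)
        have hall2 : ∀ m, m ≠ j → r m = q m := by
          by_contra hc
          exact hd2 (by rw [deltaOff, if_neg]; push_neg at hc ⊢; exact hc)
        funext m
        by_cases hmi : m = i
        · subst hmi; rw [Function.update_self]; exact hall2 _ hij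
        · rw [Function.update_of_ne hmi]; exact (hall1 m hmi).symm
  · intro hcon; exact absurd (Finset.mem_univ _) hcon

lemma Phi_commute {i j : Fin k} (hij : i ≠ j)
    (A B : Matrix (Fin n) (Fin n) (Cb F k n X)) :
    Commute (Phi F k n X i A) (Phi F k n X j B) := by
  rw [Commute, SemiconjBy, Phi_mul_apply_ne F k n X hij, Phi_mul_apply_ne F k n X hij.symm]
  refine Matrix.ext fun p q => ?_
  simp only [Matrix.of_apply]
  have : (if ∀ m, m ≠ i → m ≠ j → p m = q m then (1:Cb F k n X) else 0)
      = (if ∀ m, m ≠ j → m ≠ i → p m = q m then 1 else 0) := by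
    congr 1
    exact propext ⟨fun h m h1 h2 => h m h2 h1, fun h m h1 h2 => h m h2 h1⟩
  rw [this]
  ring

lemma Phi_noncommProd (A : ∀ i, Matrix (Fin n) (Fin n) (Cb F k n X)) (s : Finset (Fin k))
    (comm : (↑s : Set (Fin k)).Pairwise fun a b => Commute (Phi F k n X a (A a)) (Phi F k n X b (A b))) :
    s.noncommProd (fun i => Phi F k n X i (A i)) comm = Matrix.of fun p q =>
      (∏ i ∈ s, A i (p i) (q i)) * (if ∀ j, j ∉ s → p j = q j then 1 else 0) := by
  classical
  induction s using Finset.induction_on with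
  | empty =>
    rw [Finset.noncommProd_empty]
    refine Matrix.ext fun p q => ?_
    simp only [Matrix.of_apply, Finset.prod_empty, one_mul, Matrix.one_apply]
    congr 1
    refine propext ⟨fun h j _ => congrFun h j, fun h => funext fun j => h j (Finset.notMem_empty j)⟩
  | @insert a s ha ih =>
    rw [Finset.noncommProd_insert_of_notMem _ _ _ _ ha, ih]
    refine Matrix.ext fun p q => ?_
    rw [Matrix.mul_apply]
    simp only [Phi_apply, Matrix.of_apply]
    rw [Finset.sum_eq_single (Function.update p a (q a))]
    · rw [Function.update_self]
      have h1 : deltaOff F k n X a p (Function.update p a (q a)) = 1 := by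
        rw [deltaOff, if_pos fun m hmi => (Function.update_of_ne hmi _ _).symm]
      have h2 : ∀ i ∈ s, A i (Function.update p a (q a) i) (q i) = A i (p i) (q i) := by
        intro i hi
        rw [Function.update_of_ne (fun hc => ha (by rwa [hc] at hi))]
      have h3 : (if ∀ j, j ∉ s → Function.update p a (q a) j = q j then (1:Cb F k n X) else 0)
          = (if ∀ j, j ∉ insert a s → p j = q j then 1 else 0) := by
        congr 1
        refine propext ⟨fun hall j hj => ?_, fun hall j hj => ?_⟩
        · have := hall j (fun hc => hj (Finset.mem_insert_of_mem hc))
          rwa [Function.update_of_ne (fun hc => hj (by rw [hc]; exact Finset.mem_insert_self a s))] at this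
        · by_cases hja : j = a
          · subst hja; rw [Function.update_self]
          · rw [Function.update_of_ne hja]
            exact hall j (fun hc => hj (Finset.mem_insert.mp hc |>.elim (fun h => absurd h hja) id))
      rw [h1, Finset.prod_congr rfl h2, h3, Finset.prod_insert ha]
      ring
    · intro r _ hr
      by_cases hd1 : deltaOff F k n X a p r = 0
      · rw [hd1, mul_zero, zero_mul]
      · by_cases hd2 : (if ∀ j, j ∉ s → r j = q j then (1:Cb F k n X) else 0) = 0
        · rw [hd2, mul_zero, mul_zero]
        · exfalso
          apply hr
          have hall1 : ∀ m, m ≠ a → p m = r m := by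
            by_contra hc
            exact hd1 (by rw [deltaOff, if_neg]; push_neg at hc ⊢; exact hc)
          have hall2 : ∀ m, m ∉ s → r m = q m := by
            by_contra hc
            exact hd2 (by rw [if_neg]; push_neg at hc ⊢; exact hc)
          funext m
          by_cases hma : m = a
          · subst hma; rw [Function.update_self]; exact hall2 _ ha
          · rw [Function.update_of_ne hma]; exact (hall1 m hma).symm
    · intro hcon; exact absurd (Finset.mem_univ _) hcon

/-- the subalgebra which is the image of the twisted polynomial model -/
noncomputable def rangeS : Subalgebra F (M F k n X) where
  carrier := Set.range (pim F k n X)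
  mul_mem' := by
    rintro a b ⟨f, rfl⟩ ⟨g, rfl⟩
    exact ⟨conv F k n X f g, (pim_mul F k n X f g).symm⟩
  add_mem' := by
    rintro a b ⟨f, rfl⟩ ⟨g, rfl⟩
    exact ⟨f + g, map_add _ f g⟩
  algebraMap_mem' r := by
    refine ⟨Finsupp.single 0 (algebraMap F (L F k n X) r), ?_⟩
    rw [pim_single]
    refine Matrix.ext fun p q => ?_
    simp only [pis, LinearMap.coe_mk, AddHom.coe_mk, Matrix.of_apply,
      Matrix.algebraMap_matrix_apply]
    have hpad : pad k n p 0 = p := by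
      funext i; simp [pad]
    have hz : zmon F k n X p 0 = 1 := by
      unfold zmon
      refine Finset.prod_eq_one fun i _ => ?_
      have : ((p i : ℕ) + (0 : Fin k → ℕ) i) / n = 0 :=
        Nat.div_eq_of_lt (by simpa using (p i).is_lt)
      rw [this, pow_zero]
    rw [hpad, hz, mul_one, AlgHom.commutes, AlgHom.commutes]
    by_cases hpq : q = p
    · subst hpq; simp
    · rw [if_neg hpq, if_neg (Ne.symm hpq)]

/-- exponent vector concentrated at slot `i` -/
noncomputable def expv (i : Fin k) (g : Fin n) : Fin k → ℕ := Pi.single i (g : ℕ)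

/-- the model element corresponding to the generic matrix of `x ∈ X i` -/
noncomputable def wgen (i : Fin k) (x : X i) : W F k n X :=
  ∑ g : Fin n, Finsupp.single (expv k n i g) (MvPolynomial.X ⟨i, x, g, 0⟩)

lemma Phi_generic (i : Fin k) (x : X i) :
    Phi F k n X i (Matrix.of fun a b => EV F k n X i (MvPolynomial.X (x, a, b)))
      = pim F k n X (wgen F k n X i x) := by
  classical
  rw [wgen, map_sum]
  refine Matrix.ext fun p q => ?_
  rw [Matrix.sum_apply]
  simp only [pim_single, pis, LinearMap.coe_mk, AddHom.coe_mk, Matrix.of_apply, Phi_apply]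
  rw [Finset.sum_eq_single (q i - p i)]
  · have hshf : shf F k n X (fun j => ((p j : ℕ))) (MvPolynomial.X ⟨i, x, q i - p i, 0⟩)
        = MvPolynomial.X ⟨i, x, q i - p i, p i⟩ := by
      rw [shf, rename_X]
      congr 1
      simp [shiftVar, Fin.cast_val_eq_self]
    have hzmon : zmon F k n X p (expv k n i (q i - p i))
        = z F k n X i ^ (((p i : ℕ) + ((q i - p i : Fin n) : ℕ)) / n) := by
      unfold zmon
      rw [Finset.prod_eq_single i]
      · congr 2
        simp [expv]
      · intro j _ hji
        have : ((p j : ℕ) + expv k n i (q i - p i) j) / n = 0 := by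
          have : expv k n i (q i - p i) j = 0 := Pi.single_eq_of_ne hji _
          rw [this, add_zero]
          exact Nat.div_eq_of_lt (p j).is_lt
        rw [this, pow_zero]
      · intro hcon; exact absurd (Finset.mem_univ _) hcon
    have hpadi : pad k n p (expv k n i (q i - p i)) i = q i := by
      simp only [pad, expv, Pi.single_eq_same, Fin.cast_val_eq_self]
      rw [add_comm, sub_add_cancel]
    by_cases hc : ∀ j, j ≠ i → p j = q j
    · have hpad : q = pad k n p (expv k n i (q i - p i)) := by
        funext j
        by_cases hji : j = i
        · subst hji; rw [hpadi]
        · simp only [pad, expv, Pi.single_eq_of_ne hji, Nat.cast_zero, add_zero]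
          exact (hc j hji).symm
      rw [if_pos hpad, hshf, hzmon, deltaOff, if_pos hc, mul_one]
      rw [EV, aeval_X]
      rw [inclL, rename_X]
    · have hpad : q ≠ pad k n p (expv k n i (q i - p i)) := by
        intro hcon
        apply hc
        intro j hji
        have := congrFun hcon j
        simp only [pad, expv, Pi.single_eq_of_ne hji, Nat.cast_zero, add_zero] at this
        exact this.symm
      rw [if_neg hpad, deltaOff, if_neg hc, mul_zero]
  · intro g _ hg
    rw [if_neg]
    intro hcon
    apply hg
    have := congrFun hcon i
    simp only [pad, expv, Pi.single_eq_same, Fin.cast_val_eq_self] at this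
    rw [this]
    rw [add_sub_cancel_left]
  · intro hcon; exact absurd (Finset.mem_univ _) hcon

/-- the evaluation homomorphism on the free algebra, slot `i` -/
noncomputable def HomF (i : Fin k) : FreeAlgebra F (X i) →ₐ[F] M F k n X :=
  ((Phi F k n X i).comp (AlgHom.mapMatrix (EV F k n X i))).comp (genericMatrixHom F (X i) n)

lemma HomF_mem (i : Fin k) (y : FreeAlgebra F (X i)) :
    HomF F k n X i y ∈ rangeS F k n X := by
  induction y using FreeAlgebra.induction with
  | grade0 r => rw [AlgHom.commutes]; exact algebraMap_mem _ r
  | grade1 x =>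
    have h1 : genericMatrixHom F (X i) n (FreeAlgebra.ι F x)
        = Matrix.of fun a b => MvPolynomial.X (x, a, b) := by
      rw [genericMatrixHom, FreeAlgebra.lift_ι_apply]
    rw [HomF, AlgHom.comp_apply, h1, AlgHom.comp_apply]
    have h2 : (AlgHom.mapMatrix (EV F k n X i)) (Matrix.of fun a b => MvPolynomial.X (x, a, b))
        = Matrix.of fun a b => EV F k n X i (MvPolynomial.X (x, a, b)) := rfl
    rw [h2, Phi_generic]
    exact ⟨wgen F k n X i x, rfl⟩
  | mul y₁ y₂ h₁ h₂ => rw [map_mul]; exact mul_mem h₁ h₂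
  | add y₁ y₂ h₁ h₂ => rw [map_add]; exact add_mem h₁ h₂

section multilin

abbrev P (i : Fin k) := MvPolynomial (X i × Fin n × Fin n) F

/-- the joint Kronecker/evaluation multilinear map on full matrix algebras -/
noncomputable def KrFull : MultilinearMap F (fun i => Matrix (Fin n) (Fin n) (P F k n X i))
    (M F k n X) where
  toFun m := Matrix.of fun p q => ∏ i, EV F k n X i (m i (p i) (q i))
  map_update_add' := by
    intro _ m j x y
    refine Matrix.ext fun p q => ?_
    simp only [Matrix.of_apply, Matrix.add_apply]
    have hrw : ∀ (v : Matrix (Fin n) (Fin n) (P F k n X j)),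
        (fun i => EV F k n X i ((Function.update m j v i) (p i) (q i)))
          = Function.update (fun i => EV F k n X i ((m i) (p i) (q i))) j
              (EV F k n X j (v (p j) (q j))) := by
      intro v
      funext i
      by_cases hij : i = j
      · subst hij; rw [Function.update_self, Function.update_self]
      · rw [Function.update_of_ne hij, Function.update_of_ne hij]
    rw [hrw, hrw, hrw, Finset.prod_update_of_mem (Finset.mem_univ j),
      Finset.prod_update_of_mem (Finset.mem_univ j), Finset.prod_update_of_mem (Finset.mem_univ j)]
    rw [Matrix.add_apply, map_add, add_mul]
  map_update_smul' := by
    intro _ m j c x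
    refine Matrix.ext fun p q => ?_
    simp only [Matrix.of_apply, Matrix.smul_apply]
    have hrw : ∀ (v : Matrix (Fin n) (Fin n) (P F k n X j)),
        (fun i => EV F k n X i ((Function.update m j v i) (p i) (q i)))
          = Function.update (fun i => EV F k n X i ((m i) (p i) (q i))) j
              (EV F k n X j (v (p j) (q j))) := by
      intro v
      funext i
      by_cases hij : i = j
      · subst hij; rw [Function.update_self, Function.update_self]
      · rw [Function.update_of_ne hij, Function.update_of_ne hij]
    rw [hrw, hrw, Finset.prod_update_of_mem (Finset.mem_univ j),
      Finset.prod_update_of_mem (Finset.mem_univ j)]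
    rw [Matrix.smul_apply, map_smul, smul_mul_assoc]

noncomputable def GA (i : Fin k) : Subalgebra F (Matrix (Fin n) (Fin n) (P F k n X i)) :=
  (genericMatrixHom F (X i) n).range

/-- restriction of `KrFull` to the generic matrix algebras -/
noncomputable def Kr : MultilinearMap F (fun i => ↥(GA F k n X i)) (M F k n X) :=
  (KrFull F k n X).compLinearMap (fun i => (GA F k n X i).val.toLinearMap)

lemma Kr_apply (a : ∀ i, ↥(GA F k n X i)) :
    Kr F k n X a = Matrix.of fun p q => ∏ i, EV F k n X i ((a i : Matrix (Fin n) (Fin n) (P F k n X i)) (p i) (q i)) :=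
  rfl

lemma Kr_one : Kr F k n X 1 = 1 := by
  refine Matrix.ext fun p q => ?_
  rw [Kr_apply]
  simp only [Matrix.of_apply, Pi.one_apply]
  have : ∀ i : Fin k, EV F k n X i (((1 : ↥(GA F k n X i)) : Matrix (Fin n) (Fin n) (P F k n X i)) (p i) (q i))
      = if p i = q i then 1 else 0 := by
    intro i
    have : ((1 : ↥(GA F k n X i)) : Matrix (Fin n) (Fin n) (P F k n X i)) (p i) (q i)
        = if p i = q i then 1 else 0 := by
      rw [OneMemClass.coe_one, Matrix.one_apply]
    rw [this, apply_ite (EV F k n X i), map_one, map_zero]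
  rw [Finset.prod_congr rfl fun i _ => this i, Matrix.one_apply]
  by_cases hpq : p = q
  · subst hpq; simp
  · rw [if_neg hpq]
    obtain ⟨i, hi⟩ := Function.ne_iff.mp hpq
    exact Finset.prod_eq_zero (Finset.mem_univ i) (if_neg hi)

lemma Kr_mul (x y : ∀ i, ↥(GA F k n X i)) :
    Kr F k n X (x * y) = Kr F k n X x * Kr F k n X y := by
  refine Matrix.ext fun p q => ?_
  rw [Kr_apply, Matrix.mul_apply]
  simp only [Matrix.of_apply, Pi.mul_apply, MulMemClass.coe_mul, Matrix.mul_apply]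
  calc (∏ i, EV F k n X i (∑ s, ((x i : Matrix (Fin n) (Fin n) (P F k n X i)) (p i) s * (y i : Matrix (Fin n) (Fin n) (P F k n X i)) s (q i))))
      = ∏ i, ∑ s, EV F k n X i ((x i : Matrix (Fin n) (Fin n) (P F k n X i)) (p i) s) * EV F k n X i ((y i : Matrix (Fin n) (Fin n) (P F k n X i)) s (q i)) := by
        refine Finset.prod_congr rfl fun i _ => ?_
        rw [map_sum]
        exact Finset.sum_congr rfl fun s _ => map_mul _ _ _
    _ = ∑ r ∈ Fintype.piFinset (fun _ : Fin k => (Finset.univ : Finset (Fin n))),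
          ∏ i, (EV F k n X i ((x i : Matrix (Fin n) (Fin n) (P F k n X i)) (p i) (r i)) * EV F k n X i ((y i : Matrix (Fin n) (Fin n) (P F k n X i)) (r i) (q i))) := by
        rw [Finset.prod_univ_sum]
    _ = ∑ r : Q k n, (∏ i, EV F k n X i ((x i : Matrix (Fin n) (Fin n) (P F k n X i)) (p i) (r i)))
          * ∏ i, EV F k n X i ((y i : Matrix (Fin n) (Fin n) (P F k n X i)) (r i) (q i)) := by
        rw [Fintype.piFinset_univ]
        exact Finset.sum_congr rfl fun r _ => Finset.prod_mul_distrib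

/-- the main algebra homomorphism from the tensor product of generic matrix algebras -/
noncomputable def psi : (PiTensorProduct F (fun i => ↥(GA F k n X i))) →ₐ[F] M F k n X :=
  PiTensorProduct.liftAlgHom (Kr F k n X) (Kr_one F k n X) (Kr_mul F k n X)

lemma psi_tprod (a : ∀ i, ↥(GA F k n X i)) :
    psi F k n X (PiTensorProduct.tprod F a) = Kr F k n X a := by
  rw [psi, PiTensorProduct.liftAlgHom_apply, PiTensorProduct.lift.tprod]

lemma Kr_mem (a : ∀ i, ↥(GA F k n X i)) : Kr F k n X a ∈ rangeS F k n X := by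
  classical
  have hcomm : ((Finset.univ : Finset (Fin k)) : Set (Fin k)).Pairwise fun i j =>
      Commute (Phi F k n X i ((EV F k n X i).mapMatrix ((a i : Matrix (Fin n) (Fin n) (P F k n X i)))))
        (Phi F k n X j ((EV F k n X j).mapMatrix ((a j : Matrix (Fin n) (Fin n) (P F k n X j))))) :=
    fun i _ j _ hij => Phi_commute F k n X hij _ _
  have heq : Kr F k n X a = Finset.univ.noncommProd
      (fun i => Phi F k n X i ((EV F k n X i).mapMatrix ((a i : Matrix (Fin n) (Fin n) (P F k n X i)))))
      hcomm := by
    rw [Phi_noncommProd]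
    refine Matrix.ext fun p q => ?_
    rw [Kr_apply]
    simp only [Matrix.of_apply]
    rw [if_pos (fun j hj => absurd (Finset.mem_univ j) hj), mul_one]
    rfl
  rw [heq]
  refine Submonoid.noncommProd_mem ((rangeS F k n X).toSubsemiring.toSubmonoid) _ _ _ ?_
  intro i _
  obtain ⟨y, hy⟩ := (AlgHom.mem_range (genericMatrixHom F (X i) n)).mp (show ((a i : Matrix (Fin n) (Fin n) (P F k n X i))) ∈ (genericMatrixHom F (X i) n).range from (a i).2)
  have : Phi F k n X i ((EV F k n X i).mapMatrix ((a i : Matrix (Fin n) (Fin n) (P F k n X i))))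
      = HomF F k n X i y := by
    rw [HomF, AlgHom.comp_apply, AlgHom.comp_apply, hy]
  rw [this]
  exact HomF_mem F k n X i y

lemma psi_mem (t : PiTensorProduct F (fun i => ↥(GA F k n X i))) :
    psi F k n X t ∈ rangeS F k n X := by
  induction t using PiTensorProduct.induction_on with
  | smul_tprod r a =>
    rw [map_smul, psi_tprod]
    exact Subalgebra.smul_mem _ (Kr_mem F k n X a) r
  | add x y hx hy =>
    rw [map_add]
    exact add_mem hx hy

section recovery

/-- recovery homomorphism: undoes `EV i`, kills all other variables -/
noncomputable def Rm (i : Fin k) : Cb F k n X →ₐ[F] P F k n X i :=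
  aeval fun v => Sum.rec (motive := fun _ => P F k n X i) (fun _ => 1)
    (fun u => if h : u.1 = i then MvPolynomial.X (h ▸ u.2.1, u.2.2.2, u.2.2.2 + u.2.2.1) else 1) v

lemma Rm_EV_self (i : Fin k) :
    (Rm F k n X i).comp (EV F k n X i) = AlgHom.id F (P F k n X i) := by
  apply MvPolynomial.algHom_ext
  rintro ⟨x, a, b⟩
  rw [AlgHom.comp_apply, EV, aeval_X, AlgHom.id_apply]
  rw [map_mul, map_pow, Rm, aeval_X, z, aeval_X]
  dsimp only
  rw [dif_pos rfl, one_pow, mul_one]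
  have : a + (b - a) = b := by rw [add_comm, sub_add_cancel]
  rw [this]

lemma Rm_EV_ne {i j : Fin k} (hij : j ≠ i) :
    (Rm F k n X i).comp (EV F k n X j) = aeval (fun _ => (1 : P F k n X i)) := by
  apply MvPolynomial.algHom_ext
  rintro ⟨x, a, b⟩
  rw [AlgHom.comp_apply, EV, aeval_X, aeval_X]
  rw [map_mul, map_pow, Rm, aeval_X, z, aeval_X]
  dsimp only
  rw [dif_neg hij, one_pow, mul_one]

lemma aeval_ones_monomial (i : Fin k) (σ : Type*) (s : σ →₀ ℕ) :
    aeval (fun _ : σ => (1 : P F k n X i)) (monomial s (1:F)) = 1 := by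
  rw [aeval_monomial]
  simp [Finsupp.prod]

/-- monic monomial predicate -/
def IsMM {σ : Type*} (c : MvPolynomial σ F) : Prop := ∃ m, c = monomial m (1:F)

lemma IsMM_one {σ : Type*} : IsMM F (1 : MvPolynomial σ F) := ⟨0, by simp⟩

lemma IsMM_X {σ : Type*} (v : σ) : IsMM F (MvPolynomial.X v : MvPolynomial σ F) :=
  ⟨Finsupp.single v 1, rfl⟩

lemma IsMM_mul {σ : Type*} {c d : MvPolynomial σ F} (hc : IsMM F c) (hd : IsMM F d) :
    IsMM F (c * d) := by
  obtain ⟨a, rfl⟩ := hc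
  obtain ⟨b, rfl⟩ := hd
  exact ⟨a + b, by rw [monomial_mul, one_mul]⟩

lemma IsMM_pow {σ : Type*} {c : MvPolynomial σ F} (hc : IsMM F c) (e : ℕ) :
    IsMM F (c ^ e) := by
  induction e with
  | zero => rw [pow_zero]; exact IsMM_one F
  | succ m ih => rw [pow_succ]; exact IsMM_mul F ih hc

lemma IsMM_prod {σ ι : Type*} (s : Finset ι) (f : ι → MvPolynomial σ F)
    (h : ∀ i ∈ s, IsMM F (f i)) : IsMM F (∏ i ∈ s, f i) :=
  Finset.prod_induction f (IsMM F) (fun _ _ => IsMM_mul F) (IsMM_one F) h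

lemma EV_monic (j : Fin k) (s : (X j × Fin n × Fin n) →₀ ℕ) :
    IsMM F (EV F k n X j (monomial s (1:F))) := by
  rw [EV, aeval_monomial]
  rw [map_one, one_mul]
  rw [Finsupp.prod]
  refine IsMM_prod F _ _ fun v _ => ?_
  refine IsMM_pow F ?_ _
  exact IsMM_mul F (IsMM_X F _) (IsMM_pow F (IsMM_X F _) _)

lemma prod_EV_monic (sv : ∀ i, (X i × Fin n × Fin n) →₀ ℕ) :
    IsMM F (∏ i, EV F k n X i (monomial (sv i) (1:F))) :=
  IsMM_prod F _ _ fun i _ => EV_monic F k n X i (sv i)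

end recovery

section basisstuff

/-- basis of the matrix algebra over `P i` -/
noncomputable def mb (i : Fin k) :
    Basis (Σ _a : Fin n, Σ _b : Fin n, ((X i × Fin n × Fin n) →₀ ℕ)) F
      (Matrix (Fin n) (Fin n) (P F k n X i)) :=
  (Pi.basis fun _ : Fin n => Pi.basis fun _ : Fin n =>
    basisMonomials (X i × Fin n × Fin n) F).map (Matrix.ofLinearEquiv F)

lemma mb_apply (i : Fin k) (a b : Fin n) (s : (X i × Fin n × Fin n) →₀ ℕ) :
    mb F k n X i ⟨a, b, s⟩
      = Matrix.of (Pi.single a (Pi.single b (monomial s (1:F)))) := by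
  classical
  rw [mb, Basis.map_apply, Pi.basis_apply, Pi.basis_apply]
  have h1 : basisMonomials (X i × Fin n × Fin n) F s = monomial s (1:F) :=
    congrFun (coe_basisMonomials _ _) s
  rw [h1]
  rfl

/-- basis of the big matrix algebra -/
noncomputable def bigB :
    Basis (Σ _p : Q k n, Σ _q : Q k n, ((Fin k ⊕ U k n X) →₀ ℕ)) F (M F k n X) :=
  (Pi.basis fun _ : Q k n => Pi.basis fun _ : Q k n =>
    basisMonomials (Fin k ⊕ U k n X) F).map (Matrix.ofLinearEquiv F)

lemma bigB_apply (p q : Q k n) (s : (Fin k ⊕ U k n X) →₀ ℕ) :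
    bigB F k n X ⟨p, q, s⟩
      = Matrix.of (Pi.single p (Pi.single q (monomial s (1:F)))) := by
  classical
  rw [bigB, Basis.map_apply, Pi.basis_apply, Pi.basis_apply]
  have h1 : basisMonomials (Fin k ⊕ U k n X) F s = monomial s (1:F) :=
    congrFun (coe_basisMonomials _ _) s
  rw [h1]
  rfl

/-- left inverse of the lifted Kronecker evaluation map -/
noncomputable def theta : M F k n X →ₗ[F]
    PiTensorProduct F (fun i => Matrix (Fin n) (Fin n) (P F k n X i)) :=
  (bigB F k n X).constr F fun t => PiTensorProduct.tprod F fun i =>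
    Matrix.of (Pi.single (t.1 i) (Pi.single (t.2.1 i) (Rm F k n X i (monomial t.2.2 (1:F)))))

lemma KrFull_mb (v : ∀ i, Σ _a : Fin n, Σ _b : Fin n, ((X i × Fin n × Fin n) →₀ ℕ))
    (mm : (Fin k ⊕ U k n X) →₀ ℕ)
    (hmm : (∏ i, EV F k n X i (monomial ((v i).2.2) (1:F))) = monomial mm (1:F)) :
    KrFull F k n X (fun i => mb F k n X i (v i))
      = bigB F k n X ⟨fun i => (v i).1, fun i => (v i).2.1, mm⟩ := by
  classical
  rw [bigB_apply]
  refine Matrix.ext fun p q => ?_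
  have hK : KrFull F k n X (fun i => mb F k n X i (v i)) p q
      = ∏ i, EV F k n X i ((mb F k n X i (v i)) (p i) (q i)) := rfl
  rw [hK]
  have hentry : ∀ i, (mb F k n X i (v i)) (p i) (q i)
      = if p i = (v i).1 ∧ q i = (v i).2.1 then monomial ((v i).2.2) (1:F) else 0 := by
    intro i
    rcases v i with ⟨a, b, s⟩
    rw [mb_apply]
    simp only [Matrix.of_apply]
    by_cases hp : p i = a
    · rw [hp, Pi.single_eq_same, Pi.single_apply]
      by_cases hq : q i = b
      · rw [if_pos hq, if_pos ⟨rfl, hq⟩]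
      · rw [if_neg hq, if_neg (fun hc => hq hc.2)]
    · rw [Pi.single_eq_of_ne hp, if_neg (fun hc => hp hc.1), Pi.zero_apply]
  simp only [Matrix.of_apply]
  by_cases hall : ∀ i, p i = (v i).1 ∧ q i = (v i).2.1
  · have h1 : ∀ i, EV F k n X i ((mb F k n X i (v i)) (p i) (q i))
        = EV F k n X i (monomial ((v i).2.2) (1:F)) := by
      intro i; rw [hentry i, if_pos (hall i)]
    rw [Finset.prod_congr rfl fun i _ => h1 i, hmm]
    have hp : p = fun i => (v i).1 := funext fun i => (hall i).1
    have hq : q = fun i => (v i).2.1 := funext fun i => (hall i).2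
    rw [hp, Pi.single_eq_same, hq, Pi.single_eq_same]
  · push_neg at hall
    obtain ⟨i, hi⟩ := hall
    have h0 : EV F k n X i ((mb F k n X i (v i)) (p i) (q i)) = 0 := by
      rw [hentry i, if_neg (fun hc => (hi hc.1) hc.2), map_zero]
    rw [Finset.prod_eq_zero (Finset.mem_univ i) h0]
    by_cases hp : p = fun i => (v i).1
    · rw [hp, Pi.single_eq_same]
      have hq : q ≠ fun i => (v i).2.1 := by
        intro hq
        exact hi (congrFun hp i) (congrFun hq i)
      rw [Pi.single_eq_of_ne hq]
    · rw [Pi.single_eq_of_ne hp, Pi.zero_apply]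

lemma theta_lift (t : PiTensorProduct F (fun i => Matrix (Fin n) (Fin n) (P F k n X i))) :
    theta F k n X (PiTensorProduct.lift (KrFull F k n X) t) = t := by
  classical
  suffices h : (theta F k n X).comp (PiTensorProduct.lift (KrFull F k n X)) = LinearMap.id by
    have := LinearMap.congr_fun h t
    simpa using this
  apply PiTensorProduct.ext
  apply Basis.ext_multilinear (fun i => mb F k n X i)
  intro v
  simp only [LinearMap.compMultilinearMap_apply, LinearMap.comp_apply,
    PiTensorProduct.lift.tprod, LinearMap.id_apply]
  obtain ⟨mm, hmm⟩ := prod_EV_monic F k n X (fun i => (v i).2.2)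
  rw [KrFull_mb F k n X v mm hmm]
  rw [theta, Basis.constr_basis]
  congr 1
  funext i
  have hrec : Rm F k n X i (monomial mm (1:F)) = monomial ((v i).2.2) (1:F) := by
    rw [← hmm, map_prod]
    rw [Finset.prod_eq_single_of_mem i (Finset.mem_univ i)]
    · have := congrArg (fun (φ : P F k n X i →ₐ[F] P F k n X i) => φ (monomial ((v i).2.2) (1:F)))
        (Rm_EV_self F k n X i)
      simpa using this
    · intro j _ hji
      have := congrArg (fun (φ : P F k n X j →ₐ[F] P F k n X i) => φ (monomial ((v j).2.2) (1:F)))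
        (Rm_EV_ne F k n X hji)
      simp only [AlgHom.comp_apply] at this
      rw [this, aeval_ones_monomial]
  rw [hrec]
  dsimp only
  rw [← mb_apply]

end basisstuff

lemma lift_Kr_factor :
    (PiTensorProduct.lift (Kr F k n X)) = (PiTensorProduct.lift (KrFull F k n X)).comp
      (PiTensorProduct.map fun i => (GA F k n X i).val.toLinearMap) := by
  refine PiTensorProduct.ext ?_
  apply MultilinearMap.ext
  intro a
  simp only [LinearMap.compMultilinearMap_apply, LinearMap.comp_apply,
    PiTensorProduct.map_tprod, PiTensorProduct.lift.tprod]
  rfl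

lemma psi_injective : Function.Injective (psi F k n X) := by
  have hretr : ∀ i, ∃ r : Matrix (Fin n) (Fin n) (P F k n X i) →ₗ[F] ↥(GA F k n X i),
      r ∘ₗ (GA F k n X i).val.toLinearMap = LinearMap.id :=
    fun i => LinearMap.exists_leftInverse_of_injective _ (by
      rw [LinearMap.ker_eq_bot]
      exact Subtype.val_injective)
  choose r hr using hretr
  have hpsi : ∀ z, psi F k n X z = PiTensorProduct.lift (Kr F k n X) z := fun z => by
    rw [psi, PiTensorProduct.liftAlgHom_apply]
  intro x y hxy
  have h1 : PiTensorProduct.lift (Kr F k n X) x = PiTensorProduct.lift (Kr F k n X) y := by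
    rw [← hpsi, ← hpsi, hxy]
  rw [lift_Kr_factor] at h1
  simp only [LinearMap.comp_apply] at h1
  have h2 : (PiTensorProduct.map fun i => (GA F k n X i).val.toLinearMap) x
      = (PiTensorProduct.map fun i => (GA F k n X i).val.toLinearMap) y := by
    rw [← theta_lift F k n X ((PiTensorProduct.map fun i => (GA F k n X i).val.toLinearMap) x),
      ← theta_lift F k n X ((PiTensorProduct.map fun i => (GA F k n X i).val.toLinearMap) y), h1]
  have hid : (PiTensorProduct.map r).comp
      (PiTensorProduct.map fun i => (GA F k n X i).val.toLinearMap) = LinearMap.id := by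
    rw [← PiTensorProduct.map_comp]
    have : (fun i => r i ∘ₗ (GA F k n X i).val.toLinearMap) = fun _ => LinearMap.id :=
      funext hr
    rw [this, PiTensorProduct.map_id]
  have h3 := congrArg (PiTensorProduct.map r) h2
  have h4 := LinearMap.congr_fun hid x
  have h5 := LinearMap.congr_fun hid y
  simp only [LinearMap.comp_apply, LinearMap.id_apply] at h4 h5
  rw [h4, h5] at h3
  exact h3

end multilin

end slot

end GMD


/-- For an infinite field `F`, pairwise disjoint nonempty sets of variables
`X₁, …, X_k` and `n ≥ 1`, the tensor product of generic matrix algebras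
`Fₙ⟨X₁⟩ ⊗_F ⋯ ⊗_F Fₙ⟨X_k⟩` is a domain: it is a nontrivial ring in which the
product of any two nonzero elements is nonzero. -/
theorem tensor_genericMatrixAlgebras_isDomain
    (F : Type*) [Field F] [Infinite F] (k : ℕ) (X : Fin k → Type*)
    [∀ i, Nonempty (X i)] (n : ℕ) (hn : 1 ≤ n) :
    Nontrivial (⨂[F] i, (genericMatrixHom F (X i) n).range) ∧
    ∀ a b : ⨂[F] i, (genericMatrixHom F (X i) n).range,
      a ≠ 0 → b ≠ 0 → a * b ≠ 0 := by
  haveI : NeZero n := ⟨by omega⟩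
  have hMnontriv : (1 : GMD.M F k n X) ≠ 0 := by
    intro h
    have h2 := congrFun (congrFun h (GMD.q0 k n)) (GMD.q0 k n)
    rw [Matrix.one_apply_eq] at h2
    exact one_ne_zero (h2.trans rfl)
  have hpsi_ne : ∀ a : ⨂[F] i, (genericMatrixHom F (X i) n).range,
      a ≠ 0 → GMD.psi F k n X a ≠ 0 := by
    intro a ha h
    exact ha (GMD.psi_injective F k n X (h.trans (map_zero (GMD.psi F k n X)).symm))
  constructor
  · refine ⟨1, 0, fun h => ?_⟩
    have := congrArg (GMD.psi F k n X) h
    exact hMnontriv ((map_one (GMD.psi F k n X)).symm.trans (this.trans (map_zero _)))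
  · intro a b ha hb hab
    obtain ⟨f, hf⟩ : GMD.psi F k n X a ∈ Set.range (GMD.pim F k n X) := GMD.psi_mem F k n X a
    obtain ⟨g, hg⟩ : GMD.psi F k n X b ∈ Set.range (GMD.pim F k n X) := GMD.psi_mem F k n X b
    have hfne : f ≠ 0 := by
      rintro rfl
      exact hpsi_ne a ha (by rw [← hf, map_zero])
    have hgne : g ≠ 0 := by
      rintro rfl
      exact hpsi_ne b hb (by rw [← hg, map_zero])
    have hprod : GMD.psi F k n X (a * b) = GMD.pim F k n X (GMD.conv F k n X f g) := by
      exact (map_mul (GMD.psi F k n X) a b).trans ((congrArg₂ (· * ·) hf.symm hg.symm).trans (GMD.pim_mul F k n X f g))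
    have : GMD.psi F k n X (a * b) ≠ 0 := by
      rw [hprod]
      exact GMD.pim_ne_zero F k n X _ (GMD.conv_ne_zero F k n X f g hfne hgne)
    exact this ((congrArg (GMD.psi F k n X) hab).trans (map_zero _))
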